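/- arXiv:2005.08767 — 4 statements merged into one kernel-verified Lean document; each statement's English description precedes it below -/
import Mathlib

section
/- Let m, n ≥ 1 and let r : ℝ^m → ℝ^n be twice continuously differentiable on an open set U ⊆ ℝ^m. Let ξ ∈ U, let s ∈ ℝ^m be a unit vector, let h > 0, and assume Dr(ξ)s ≠ 0. Set α = h / ‖Dr(ξ)s‖ and η = ξ + α s, and assume the segment from ξ to η is contained in U. Then the node-spacing error Δh(ξ,s) = h − ‖r(η) − r(ξ)‖ satisfies |Δh(ξ,s)| ≤ (√n / 2) · h² · (max over components i = 1,…,n of sup_{θ ∈ [0,α]} |D²r_i(ξ + θ s)(s, s)|) / ‖Dr(ξ)s‖², where r_i denotes the i-th coordinate function of r, Dr(ξ) its (Fréchet) derivative at ξ, and D²r_i(ζ)(s,s) the second derivative of r_i at ζ evaluated twice in direction s. -/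
open Set


/-- First (direction-dependent) estimate of Proposition 2.1: the node-spacing error
`Δh(ξ,s) = h − ‖r(η) − r(ξ)‖` for the candidate `η = ξ + (h/‖Dr(ξ)s‖) • s` is bounded by
`(√n / 2) · h² · max_i sup_{θ ∈ [0,α]} |D²r_i(ξ+θs)(s,s)| / ‖Dr(ξ)s‖²`. -/
theorem spacing_error_bound_directional
    (m n : ℕ) (hm : 1 ≤ m) (hn : 1 ≤ n)
    (r : EuclideanSpace ℝ (Fin m) → EuclideanSpace ℝ (Fin n))
    (U : Set (EuclideanSpace ℝ (Fin m))) (hU : IsOpen U)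
    (hr : ContDiffOn ℝ 2 r U)
    (ξ : EuclideanSpace ℝ (Fin m)) (hξ : ξ ∈ U)
    (s : EuclideanSpace ℝ (Fin m)) (hs : ‖s‖ = 1)
    (h : ℝ) (hh : 0 < h)
    (hDs : fderiv ℝ r ξ s ≠ 0)
    (α : ℝ) (hα : α = h / ‖fderiv ℝ r ξ s‖)
    (η : EuclideanSpace ℝ (Fin m)) (hη : η = ξ + α • s)
    (hseg : segment ℝ ξ η ⊆ U) :
    |h - ‖r η - r ξ‖| ≤
      Real.sqrt n / 2 * h ^ 2 *
        (⨆ i : Fin n, ⨆ θ ∈ Set.Icc (0 : ℝ) α,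
          |iteratedFDeriv ℝ 2 (fun x => r x i) (ξ + θ • s) ![s, s]|) /
        ‖fderiv ℝ r ξ s‖ ^ 2 := by
  classical
  set d : ℝ := ‖fderiv ℝ r ξ s‖ with hdd
  have hd : 0 < d := norm_pos_iff.mpr hDs
  have hα0 : 0 < α := by rw [hα]; positivity
  set c : ℝ → EuclideanSpace ℝ (Fin m) := fun θ => ξ + θ • s with hc
  have hccont : Continuous c := by fun_prop
  have hc0 : c 0 = ξ := by simp [hc]
  have hcα : c α = η := by rw [hη]
  have hcU : ∀ θ ∈ Icc (0:ℝ) α, c θ ∈ U := by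
    intro θ hθ
    apply hseg
    rw [segment_eq_image']
    refine ⟨θ / α, ⟨div_nonneg hθ.1 hα0.le, div_le_one_of_le₀ hθ.2 hα0.le⟩, ?_⟩
    rw [hη]
    simp only [add_sub_cancel_left, smul_smul, hc]
    rw [div_mul_cancel₀ _ hα0.ne']
  set V : Set ℝ := c ⁻¹' U with hV
  have hVopen : IsOpen V := hU.preimage hccont
  have hIccV : Icc (0:ℝ) α ⊆ V := fun θ hθ => hcU θ hθ
  have hrd : DifferentiableOn ℝ r U := hr.differentiableOn (by norm_num)
  have hFd : DifferentiableOn ℝ (fderiv ℝ r) U :=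
    (hr.fderiv_of_isOpen (m := 1) hU (by norm_num)).differentiableOn (by norm_num)
  have hcd : ∀ θ : ℝ, HasDerivAt c s θ := by
    intro θ
    simpa only [id, one_smul] using ((hasDerivAt_id θ).smul_const s).const_add ξ
  -- first derivative of components
  have hgC : ∀ i : Fin n, ∀ θ ∈ V,
      HasDerivAt (fun t => r (c t) i) (fderiv ℝ r (c θ) s i) θ := by
    intro i θ hθ
    have hrx : DifferentiableAt ℝ r (c θ) := hrd.differentiableAt (hU.mem_nhds hθ)
    have h1 : HasDerivAt (fun t => r (c t)) (fderiv ℝ r (c θ) s) θ :=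
      hrx.hasFDerivAt.comp_hasDerivAt θ (hcd θ)
    exact (EuclideanSpace.proj i).hasFDerivAt.comp_hasDerivAt θ h1
  -- second derivative of components
  have hφC : ∀ i : Fin n, ∀ θ ∈ V,
      HasDerivAt (fun t => fderiv ℝ r (c t) s i) (fderiv ℝ (fderiv ℝ r) (c θ) s s i) θ := by
    intro i θ hθ
    have hFx : DifferentiableAt ℝ (fderiv ℝ r) (c θ) := hFd.differentiableAt (hU.mem_nhds hθ)
    have h1 : HasDerivAt (fun t => fderiv ℝ r (c t)) (fderiv ℝ (fderiv ℝ r) (c θ) s) θ :=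
      hFx.hasFDerivAt.comp_hasDerivAt θ (hcd θ)
    have h2 : HasDerivAt (fun t => fderiv ℝ r (c t) s) (fderiv ℝ (fderiv ℝ r) (c θ) s s) θ :=
      (ContinuousLinearMap.apply ℝ (EuclideanSpace ℝ (Fin n)) s).hasFDerivAt.comp_hasDerivAt θ h1
    exact (EuclideanSpace.proj i).hasFDerivAt.comp_hasDerivAt θ h2
  -- identify the iterated derivative with the bilinear second derivative
  have hiter : ∀ i : Fin n, ∀ z ∈ U,
      iteratedFDeriv ℝ 2 (fun x => r x i) z ![s, s] = fderiv ℝ (fderiv ℝ r) z s s i := by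
    intro i z hz
    set π : EuclideanSpace ℝ (Fin n) →L[ℝ] ℝ := EuclideanSpace.proj i with hπ
    have hev : (fun x => fderiv ℝ (fun y => r y i) x)
        =ᶠ[nhds z] fun x => (ContinuousLinearMap.compL ℝ (EuclideanSpace ℝ (Fin m))
          (EuclideanSpace ℝ (Fin n)) ℝ π) (fderiv ℝ r x) := by
      filter_upwards [hU.mem_nhds hz] with x hx
      have := (π.hasFDerivAt.comp x (hrd.differentiableAt (hU.mem_nhds hx)).hasFDerivAt).fderiv
      simp only [ContinuousLinearMap.compL_apply] at this ⊢
      exact this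
    have h2 : fderiv ℝ (fun x => (ContinuousLinearMap.compL ℝ (EuclideanSpace ℝ (Fin m))
          (EuclideanSpace ℝ (Fin n)) ℝ π) (fderiv ℝ r x)) z
        = (ContinuousLinearMap.compL ℝ (EuclideanSpace ℝ (Fin m))
          (EuclideanSpace ℝ (Fin n)) ℝ π).comp (fderiv ℝ (fderiv ℝ r) z) :=
      ((ContinuousLinearMap.compL ℝ (EuclideanSpace ℝ (Fin m))
          (EuclideanSpace ℝ (Fin n)) ℝ π).hasFDerivAt.comp z
        (hFd.differentiableAt (hU.mem_nhds hz)).hasFDerivAt).fderiv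
    rw [iteratedFDeriv_two_apply, hev.fderiv_eq, h2]
    simp [ContinuousLinearMap.compL_apply, hπ, PiLp.proj_apply]
  -- componentwise smoothness
  have hri : ∀ i : Fin n, ContDiffOn ℝ 2 (fun x => r x i) U := fun i =>
    ContDiff.comp_contDiffOn
      (ContinuousLinearMap.contDiff (EuclideanSpace.proj (𝕜 := ℝ) i)) hr
  -- the sup bound M
  set q : Fin n → ℝ → ℝ :=
    fun i θ => |iteratedFDeriv ℝ 2 (fun x => r x i) (ξ + θ • s) ![s, s]| with hq
  show _ ≤ Real.sqrt n / 2 * h ^ 2 * (⨆ i : Fin n, ⨆ θ ∈ Set.Icc (0:ℝ) α, q i θ) / d ^ 2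
  set M : ℝ := ⨆ i : Fin n, ⨆ θ ∈ Set.Icc (0:ℝ) α, q i θ with hM
  have hqcont : ∀ i : Fin n, ContinuousOn (q i) (Icc (0:ℝ) α) := by
    intro i
    have hcont : ContinuousOn (iteratedFDeriv ℝ 2 (fun x => r x i)) U := by
      have h1 := (hri i).continuousOn_iteratedFDerivWithin (le_refl 2) hU.uniqueDiffOn
      exact h1.congr fun x hx => (iteratedFDerivWithin_of_isOpen 2 hU hx).symm
    have h3 : ContinuousOn (fun θ => iteratedFDeriv ℝ 2 (fun x => r x i) (c θ)) (Icc 0 α) :=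
      hcont.comp hccont.continuousOn hcU
    exact (continuous_abs.comp (continuous_eval_const ![s, s])).comp_continuousOn h3
  have hbdd : ∀ i : Fin n, BddAbove (q i '' Icc (0:ℝ) α) := fun i =>
    (isCompact_Icc.image_of_continuousOn (hqcont i)).bddAbove
  have hQeq : ∀ i : Fin n,
      (⨆ θ ∈ Icc (0:ℝ) α, q i θ) = ⨆ θ : Icc (0:ℝ) α, q i θ := by
    intro i
    refine (ciSup_subtype_fun ?_ ?_).symm
    · rw [← Set.image_eq_range]; exact hbdd i
    · rw [Real.sSup_empty]
      exact Real.iSup_nonneg fun θ => abs_nonneg _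
  have hqM : ∀ i : Fin n, ∀ θ ∈ Icc (0:ℝ) α, q i θ ≤ M := by
    intro i θ hθ
    have h1 : q i θ ≤ ⨆ θ ∈ Icc (0:ℝ) α, q i θ := by
      rw [hQeq i]; exact le_ciSup_set (hbdd i) hθ
    refine h1.trans ?_
    exact le_ciSup (f := fun j : Fin n => ⨆ θ ∈ Icc (0:ℝ) α, q j θ)
      (Set.Finite.bddAbove (Set.finite_range _)) i
  have hM0 : 0 ≤ M :=
    le_trans (abs_nonneg _) (hqM ⟨0, hn⟩ 0 ⟨le_refl _, hα0.le⟩)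
  -- componentwise Taylor with Lagrange remainder
  have hudIcc : UniqueDiffOn ℝ (Icc (0:ℝ) α) := uniqueDiffOn_Icc hα0
  have hRi : ∀ i : Fin n,
      |r η i - r ξ i - α * fderiv ℝ r ξ s i| ≤ M * α ^ 2 / 2 := by
    intro i
    have hgc : ContDiffOn ℝ 1 (fun t => r (c t) i) (Icc (0:ℝ) α) := by
      have hcs : ContDiff ℝ 2 c := by
        apply contDiff_const.add
        exact contDiff_id.smul contDiff_const
      exact ((hri i).comp hcs.contDiffOn hcU).of_le one_le_two
    have hEq : EqOn (iteratedDerivWithin 1 (fun t => r (c t) i) (Icc (0:ℝ) α))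
        (fun θ => fderiv ℝ r (c θ) s i) (Icc (0:ℝ) α) := by
      intro z hz
      rw [iteratedDerivWithin_one]
      exact ((hgC i z (hIccV hz)).hasDerivWithinAt).derivWithin (hudIcc z hz)
    have hf' : DifferentiableOn ℝ
        (iteratedDerivWithin 1 (fun t => r (c t) i) (Icc (0:ℝ) α)) (Ioo (0:ℝ) α) := by
      have hdiff : DifferentiableOn ℝ (fun θ => fderiv ℝ r (c θ) s i) (Ioo (0:ℝ) α) :=
        fun z hz => ((hφC i z (hIccV (Ioo_subset_Icc_self hz))).differentiableAt
          ).differentiableWithinAt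
      exact hdiff.congr fun z hz => hEq (Ioo_subset_Icc_self hz)
    obtain ⟨x', hx', hTay⟩ := taylor_mean_remainder_lagrange (n := 1) hα0.ne
      (by rw [uIcc_of_le hα0.le]; exact_mod_cast hgc)
      (by rw [uIcc_of_le hα0.le, uIoo_of_le hα0.le]; exact hf')
    rw [uIoo_of_le hα0.le] at hx'
    rw [uIcc_of_le hα0.le] at hTay
    have hx'I : x' ∈ Icc (0:ℝ) α := Ioo_subset_Icc_self hx'
    set D : ℝ := fderiv ℝ (fderiv ℝ r) (c x') s s i with hD
    have hT1 : taylorWithinEval (fun t => r (c t) i) 1 (Icc (0:ℝ) α) 0 α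
        = r (c 0) i + α * fderiv ℝ r (c 0) s i := by
      rw [taylorWithinEval_succ, taylor_within_zero_eval,
        iteratedDerivWithin_one,
        ((hgC i 0 (hIccV ⟨le_refl _, hα0.le⟩)).hasDerivWithinAt).derivWithin
          (hudIcc 0 ⟨le_refl _, hα0.le⟩)]
      norm_num
    have hT2 : iteratedDerivWithin 2 (fun t => r (c t) i) (Icc (0:ℝ) α) x' = D := by
      rw [show (2:ℕ) = 1 + 1 from rfl, iteratedDerivWithin_succ,
        derivWithin_congr hEq (hEq hx'I)]
      exact ((hφC i x' (hIccV hx'I)).hasDerivWithinAt).derivWithin (hudIcc x' hx'I)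
    rw [hT1, hT2, hc0, hcα] at hTay
    have heq : r η i - r ξ i - α * fderiv ℝ r ξ s i = D * α ^ 2 / 2 := by
      have h2 := hTay
      norm_num [Nat.factorial] at h2
      linarith [h2]
    have habs : |D| ≤ M := by
      have := hiter i (c x') (hcU x' hx'I)
      rw [hD, ← this]
      exact hqM i x' hx'I
    rw [heq, abs_div, abs_mul, abs_of_nonneg (sq_nonneg α),
      abs_of_nonneg (by norm_num : (0:ℝ) ≤ 2)]
    exact div_le_div_of_nonneg_right (mul_le_mul_of_nonneg_right habs (sq_nonneg α))
      (by norm_num) |>.trans_eq rfl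
  -- norm bound of the remainder
  set R : EuclideanSpace ℝ (Fin n) := r η - r ξ - α • fderiv ℝ r ξ s with hR
  have hRcomp : ∀ i : Fin n, |R i| ≤ M * α ^ 2 / 2 := by
    intro i
    have hRapp : R i = r η i - r ξ i - α * fderiv ℝ r ξ s i := by
      rw [hR]; simp
    rw [hRapp]; exact hRi i
  have hRnorm : ‖R‖ ≤ Real.sqrt n * (M * α ^ 2 / 2) := by
    rw [EuclideanSpace.norm_eq]
    have hB : (0:ℝ) ≤ M * α ^ 2 / 2 := by positivity
    have h1 : ∑ i : Fin n, ‖R i‖ ^ 2 ≤ ∑ i : Fin n, (M * α ^ 2 / 2) ^ 2 := by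
      refine Finset.sum_le_sum fun i _ => ?_
      rw [Real.norm_eq_abs]
      exact pow_le_pow_left₀ (abs_nonneg _) (hRcomp i) 2
    calc Real.sqrt (∑ i : Fin n, ‖R i‖ ^ 2)
        ≤ Real.sqrt (∑ i : Fin n, (M * α ^ 2 / 2) ^ 2) := Real.sqrt_le_sqrt h1
      _ = Real.sqrt (n * (M * α ^ 2 / 2) ^ 2) := by
          rw [Finset.sum_const, Finset.card_univ, Fintype.card_fin, nsmul_eq_mul]
      _ = Real.sqrt n * (M * α ^ 2 / 2) := by
          rw [Real.sqrt_mul (Nat.cast_nonneg n), Real.sqrt_sq hB]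
  -- conclusion
  have hhnorm : h = ‖α • fderiv ℝ r ξ s‖ := by
    rw [norm_smul, Real.norm_eq_abs, abs_of_pos hα0, hα, ← hdd]
    field_simp
  have hkey : |h - ‖r η - r ξ‖| ≤ ‖R‖ := by
    rw [hhnorm]
    refine le_trans (abs_norm_sub_norm_le _ _) ?_
    rw [hR, show α • fderiv ℝ r ξ s - (r η - r ξ)
      = -(r η - r ξ - α • fderiv ℝ r ξ s) by abel, norm_neg]
  refine le_trans hkey (le_trans hRnorm (le_of_eq ?_))
  rw [hα]
  field_simp
end

section
/- Let m, n ≥ 1 and let r : ℝ^m → ℝ^n be twice continuously differentiable on an open set U ⊆ ℝ^m. Let ξ ∈ U and h > 0, and suppose there is σ > 0 such that ‖Dr(ξ)u‖ ≥ σ‖u‖ for every u ∈ ℝ^m. Set ρ = h / σ and assume the closed ball of radius ρ centered at ξ is contained in U. Then for every unit vector s ∈ ℝ^m, with α = h / ‖Dr(ξ)s‖ and η = ξ + α s, the spacing error Δh(ξ,s) = h − ‖r(η) − r(ξ)‖ satisfies |Δh(ξ,s)| ≤ (√n / 2) · h² · (max over components i = 1,…,n of sup_{ζ ∈ closed ball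 B̄(ξ, ρ)} ‖D²r_i(ζ)‖) / σ², where ‖D²r_i(ζ)‖ denotes the operator norm of the second derivative (Hessian) of the i-th coordinate function r_i of r at ζ. -/
open Metric Set

private lemma euclid_norm_le_aux {n : ℕ} (w : EuclideanSpace ℝ (Fin n)) (C : ℝ) (hC : 0 ≤ C)
    (hw : ∀ i, |w i| ≤ C) : ‖w‖ ≤ Real.sqrt n * C := by
  rw [EuclideanSpace.norm_eq]
  have h1 : ∑ i, ‖w i‖ ^ 2 ≤ ∑ _i : Fin n, C ^ 2 := by
    apply Finset.sum_le_sum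
    intro i _
    have : ‖w i‖ ≤ C := by rw [Real.norm_eq_abs]; exact hw i
    exact pow_le_pow_left₀ (norm_nonneg _) this 2
  calc Real.sqrt (∑ i, ‖w i‖ ^ 2) ≤ Real.sqrt (∑ _i : Fin n, C ^ 2) := Real.sqrt_le_sqrt h1
    _ = Real.sqrt (n * C ^ 2) := by
        rw [Finset.sum_const, Finset.card_univ, Fintype.card_fin, nsmul_eq_mul]
    _ = Real.sqrt n * C := by rw [Real.sqrt_mul (by positivity), Real.sqrt_sq hC]

private lemma second_deriv_comp_aux {m n : ℕ}
    (r : EuclideanSpace ℝ (Fin m) → EuclideanSpace ℝ (Fin n))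
    (U : Set (EuclideanSpace ℝ (Fin m))) (hU : IsOpen U) (hr : ContDiffOn ℝ 2 r U)
    (ζ : EuclideanSpace ℝ (Fin m)) (hζ : ζ ∈ U) (v : EuclideanSpace ℝ (Fin m)) (i : Fin n) :
    fderiv ℝ (fderiv ℝ r) ζ v v i = iteratedFDeriv ℝ 2 (fun x => r x i) ζ ![v, v] := by
  have e1 : fderiv ℝ (fderiv ℝ r) ζ v v = iteratedFDeriv ℝ 2 r ζ ![v, v] := by
    rw [iteratedFDeriv_two_apply]; simp
  have e2 : iteratedFDeriv ℝ 2 r ζ = iteratedFDerivWithin ℝ 2 r U ζ :=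
    (iteratedFDerivWithin_of_isOpen 2 hU hζ).symm
  have e3 := (EuclideanSpace.proj (𝕜 := ℝ) i).iteratedFDerivWithin_comp_left (hr ζ hζ)
    hU.uniqueDiffOn hζ (le_refl 2)
  have e4 : iteratedFDerivWithin ℝ 2 (fun x => r x i) U ζ
      = iteratedFDeriv ℝ 2 (fun x => r x i) ζ :=
    iteratedFDerivWithin_of_isOpen 2 hU hζ
  rw [e1, e2, ← e4]
  rw [show (fun x => r x i) = (⇑(EuclideanSpace.proj (𝕜 := ℝ) i) ∘ r) from rfl, e3]
  simp

/-- Second (direction-independent, per-point) estimate of Proposition 2.1: if `σ > 0` is a lower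
bound for the smallest singular value of `Dr(ξ)` and the closed ball `B̄(ξ, h/σ)` lies in `U`,
then for every unit direction `s` the spacing error satisfies
`|Δh(ξ,s)| ≤ (√n / 2) · h² · max_i sup_{ζ ∈ B̄(ξ,ρ)} ‖D²r_i(ζ)‖ / σ²`. -/
theorem spacing_error_bound_pointwise
    (m n : ℕ) (hm : 1 ≤ m) (hn : 1 ≤ n)
    (r : EuclideanSpace ℝ (Fin m) → EuclideanSpace ℝ (Fin n))
    (U : Set (EuclideanSpace ℝ (Fin m))) (hU : IsOpen U)
    (hr : ContDiffOn ℝ 2 r U)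
    (ξ : EuclideanSpace ℝ (Fin m)) (hξ : ξ ∈ U)
    (h : ℝ) (hh : 0 < h)
    (σ : ℝ) (hσ : 0 < σ)
    (hsing : ∀ u : EuclideanSpace ℝ (Fin m), σ * ‖u‖ ≤ ‖fderiv ℝ r ξ u‖)
    (ρ : ℝ) (hρ : ρ = h / σ)
    (hball : Metric.closedBall ξ ρ ⊆ U) :
    ∀ s : EuclideanSpace ℝ (Fin m), ‖s‖ = 1 →
      ∀ α : ℝ, α = h / ‖fderiv ℝ r ξ s‖ →
        ∀ η : EuclideanSpace ℝ (Fin m), η = ξ + α • s →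
          |h - ‖r η - r ξ‖| ≤
            Real.sqrt n / 2 * h ^ 2 *
              (⨆ i : Fin n, ⨆ ζ ∈ Metric.closedBall ξ ρ,
                ‖iteratedFDeriv ℝ 2 (fun x => r x i) ζ‖) / σ ^ 2 := by
  intro s hs α hα η hη
  have hDs : σ ≤ ‖fderiv ℝ r ξ s‖ := by simpa [hs] using hsing s
  have hDspos : 0 < ‖fderiv ℝ r ξ s‖ := lt_of_lt_of_le hσ hDs
  have hα0 : 0 < α := by rw [hα]; positivity
  have hαρ : α ≤ ρ := by rw [hα, hρ]; gcongr
  have hρ0 : 0 < ρ := lt_of_lt_of_le hα0 hαρ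
  set v : EuclideanSpace ℝ (Fin m) := α • s with hv_def
  have hvnorm : ‖v‖ = α := by
    rw [hv_def, norm_smul, hs, Real.norm_eq_abs, abs_of_pos hα0, mul_one]
  have hLball : ∀ t ∈ Icc (0:ℝ) 1, ξ + t • v ∈ Metric.closedBall ξ ρ := by
    intro t ht
    rw [Metric.mem_closedBall, dist_eq_norm]
    have e : ξ + t • v - ξ = t • v := by abel
    rw [e, norm_smul, Real.norm_eq_abs, abs_of_nonneg ht.1, hvnorm]
    calc t * α ≤ 1 * ρ := mul_le_mul ht.2 hαρ hα0.le zero_le_one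
      _ = ρ := one_mul ρ
  have hLU : ∀ t ∈ Icc (0:ℝ) 1, ξ + t • v ∈ U := fun t ht => hball (hLball t ht)
  set M := (⨆ i : Fin n, ⨆ ζ ∈ Metric.closedBall ξ ρ,
      ‖iteratedFDeriv ℝ 2 (fun x => r x i) ζ‖) with hM_def
  -- every value on the ball is below the iSup
  have hkey : ∀ i : Fin n, ∀ ζ ∈ Metric.closedBall ξ ρ,
      ‖iteratedFDeriv ℝ 2 (fun x => r x i) ζ‖ ≤ M := by
    intro i
    have hri : ContDiffOn ℝ 2 (fun x => r x i) U :=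
      (EuclideanSpace.proj (𝕜 := ℝ) i).contDiff.comp_contDiffOn hr
    have hcont : ContinuousOn (iteratedFDeriv ℝ 2 (fun x => r x i))
        (Metric.closedBall ξ ρ) := by
      have h1 : ContinuousOn (iteratedFDerivWithin ℝ 2 (fun x => r x i) U) U :=
        hri.continuousOn_iteratedFDerivWithin (le_refl 2) hU.uniqueDiffOn
      exact (h1.congr fun x hx =>
        ((iteratedFDerivWithin_of_isOpen 2 hU) hx).symm).mono hball
    obtain ⟨C, hC⟩ := (isCompact_closedBall ξ ρ).exists_bound_of_continuousOn hcont
    have hbdd : BddAbove (Set.range fun ζ => ⨆ _ : ζ ∈ Metric.closedBall ξ ρ,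
        ‖iteratedFDeriv ℝ 2 (fun x => r x i) ζ‖) := by
      refine ⟨max C 0, ?_⟩
      rintro x ⟨ζ, rfl⟩
      dsimp only
      by_cases hζ : ζ ∈ Metric.closedBall ξ ρ
      · rw [ciSup_pos hζ]; exact le_max_of_le_left (hC ζ hζ)
      · haveI : IsEmpty (ζ ∈ Metric.closedBall ξ ρ) := ⟨fun hp => hζ hp⟩
        rw [Real.iSup_of_isEmpty]; exact le_max_right _ _
    intro ζ hζ
    have step1 : ‖iteratedFDeriv ℝ 2 (fun x => r x i) ζ‖ ≤
        ⨆ ζ ∈ Metric.closedBall ξ ρ, ‖iteratedFDeriv ℝ 2 (fun x => r x i) ζ‖ := by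
      have := le_ciSup hbdd ζ
      rwa [ciSup_pos hζ] at this
    exact step1.trans (le_ciSup (Set.finite_range
      (fun i : Fin n => ⨆ ζ ∈ Metric.closedBall ξ ρ,
        ‖iteratedFDeriv ℝ 2 (fun x => r x i) ζ‖)).bddAbove i)
  have hM0 : 0 ≤ M :=
    le_trans (norm_nonneg _) (hkey ⟨0, hn⟩ ξ (Metric.mem_closedBall_self hρ0.le))
  -- derivatives along the segment
  have hL' : ∀ t : ℝ, HasDerivAt (fun u : ℝ => ξ + u • v) v t := by
    intro t
    simpa using ((hasDerivAt_id t).smul_const v).const_add ξ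
  have hdφ : ∀ t ∈ Icc (0:ℝ) 1,
      HasDerivAt (fun u : ℝ => r (ξ + u • v)) (fderiv ℝ r (ξ + t • v) v) t := by
    intro t ht
    have hdr : DifferentiableAt ℝ r (ξ + t • v) :=
      (hr.differentiableOn two_ne_zero).differentiableAt (hU.mem_nhds (hLU t ht))
    exact hdr.hasFDerivAt.comp_hasDerivAt t (hL' t)
  have hdψ : ∀ t ∈ Icc (0:ℝ) 1,
      HasDerivAt (fun u : ℝ => fderiv ℝ r (ξ + u • v) v)
        (fderiv ℝ (fderiv ℝ r) (ξ + t • v) v v) t := by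
    intro t ht
    have h2 : ContDiffAt ℝ 2 r (ξ + t • v) := hr.contDiffAt (hU.mem_nhds (hLU t ht))
    have h1 : ContDiffAt ℝ 1 (fderiv ℝ r) (ξ + t • v) := h2.fderiv_right (by norm_num)
    have hd : HasFDerivAt (fderiv ℝ r) (fderiv ℝ (fderiv ℝ r) (ξ + t • v)) (ξ + t • v) :=
      (h1.differentiableAt one_ne_zero).hasFDerivAt
    have hA : HasDerivAt (fun u : ℝ => fderiv ℝ r (ξ + u • v))
        (fderiv ℝ (fderiv ℝ r) (ξ + t • v) v) t := hd.comp_hasDerivAt t (hL' t)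
    simpa using hA.clm_apply (hasDerivAt_const t v)
  -- bound on the second derivative along the segment
  have hψ'bound : ∀ t ∈ Icc (0:ℝ) 1,
      ‖fderiv ℝ (fderiv ℝ r) (ξ + t • v) v v‖ ≤ Real.sqrt n * (M * α ^ 2) := by
    intro t ht
    apply euclid_norm_le_aux _ _ (by positivity)
    intro i
    rw [second_deriv_comp_aux r U hU hr _ (hLU t ht) v i, ← Real.norm_eq_abs]
    have hle := (iteratedFDeriv ℝ 2 (fun x => r x i) (ξ + t • v)).le_opNorm ![v, v]
    have hprod : (∏ j, ‖(![v, v] : Fin 2 → EuclideanSpace ℝ (Fin m)) j‖) = α ^ 2 := by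
      rw [Fin.prod_univ_two]
      simp [hvnorm]
      ring
    rw [hprod] at hle
    calc ‖iteratedFDeriv ℝ 2 (fun x => r x i) (ξ + t • v) ![v, v]‖
        ≤ ‖iteratedFDeriv ℝ 2 (fun x => r x i) (ξ + t • v)‖ * α ^ 2 := hle
      _ ≤ M * α ^ 2 := by
          apply mul_le_mul_of_nonneg_right (hkey i _ (hLball t ht)) (by positivity)
  -- first mean value step
  have hA : ∀ t ∈ Icc (0:ℝ) 1,
      ‖fderiv ℝ r (ξ + t • v) v - fderiv ℝ r ξ v‖ ≤ Real.sqrt n * (M * α ^ 2) * t := by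
    have base := norm_image_sub_le_of_norm_deriv_le_segment'
      (f := fun u : ℝ => fderiv ℝ r (ξ + u • v) v)
      (f' := fun u : ℝ => fderiv ℝ (fderiv ℝ r) (ξ + u • v) v v) (a := 0) (b := 1)
      (fun x hx => (hdψ x hx).hasDerivWithinAt)
      (fun x hx => hψ'bound x (Ico_subset_Icc_self hx))
    intro t ht
    have := base t ht
    simpa using this
  -- second mean value step with quadratic boundary
  have hg' : ∀ t ∈ Icc (0:ℝ) 1,
      HasDerivAt (fun u : ℝ => r (ξ + u • v) - r ξ - u • (fderiv ℝ r ξ v))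
        (fderiv ℝ r (ξ + t • v) v - fderiv ℝ r ξ v) t := by
    intro t ht
    have h1 := (hdφ t ht).sub_const (r ξ)
    have h2 : HasDerivAt (fun u : ℝ => u • (fderiv ℝ r ξ v)) (fderiv ℝ r ξ v) t := by
      simpa using (hasDerivAt_id t).smul_const (fderiv ℝ r ξ v)
    exact h1.sub h2
  have hB : ∀ x : ℝ, HasDerivAt (fun u : ℝ => Real.sqrt n * (M * α ^ 2) * u ^ 2 / 2)
      (Real.sqrt n * (M * α ^ 2) * x) x := by
    intro x
    have h1 : HasDerivAt (fun u : ℝ => u ^ 2) (2 * x) x := by simpa using hasDerivAt_pow 2 x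
    have h2 := (h1.const_mul (Real.sqrt n * (M * α ^ 2))).div_const 2
    rw [show Real.sqrt n * (M * α ^ 2) * x = Real.sqrt n * (M * α ^ 2) * (2 * x) / 2 by ring]
    exact h2
  have main := image_norm_le_of_norm_deriv_right_le_deriv_boundary
    (f := fun u : ℝ => r (ξ + u • v) - r ξ - u • (fderiv ℝ r ξ v))
    (f' := fun u : ℝ => fderiv ℝ r (ξ + u • v) v - fderiv ℝ r ξ v)
    (a := 0) (b := 1)
    (fun t ht => (hg' t ht).continuousAt.continuousWithinAt)
    (fun x hx => (hg' x (Ico_subset_Icc_self hx)).hasDerivWithinAt)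
    (B := fun u : ℝ => Real.sqrt n * (M * α ^ 2) * u ^ 2 / 2)
    (B' := fun u : ℝ => Real.sqrt n * (M * α ^ 2) * u)
    (by simp) hB
    (fun x hx => hA x (Ico_subset_Icc_self hx))
    (right_mem_Icc.mpr zero_le_one)
  have hrem : ‖r η - r ξ - fderiv ℝ r ξ v‖ ≤ Real.sqrt n * (M * α ^ 2) / 2 := by
    have h1 : r (ξ + (1:ℝ) • v) - r ξ - (1:ℝ) • (fderiv ℝ r ξ v)
        = r η - r ξ - fderiv ℝ r ξ v := by
      rw [hη, one_smul, one_smul]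
    have h2 : Real.sqrt n * (M * α ^ 2) * (1:ℝ) ^ 2 / 2
        = Real.sqrt n * (M * α ^ 2) / 2 := by ring
    calc ‖r η - r ξ - fderiv ℝ r ξ v‖
        = ‖r (ξ + (1:ℝ) • v) - r ξ - (1:ℝ) • (fderiv ℝ r ξ v)‖ := by rw [h1]
      _ ≤ Real.sqrt n * (M * α ^ 2) * (1:ℝ) ^ 2 / 2 := main
      _ = Real.sqrt n * (M * α ^ 2) / 2 := h2
  have hDvnorm : ‖fderiv ℝ r ξ v‖ = h := by
    rw [hv_def, map_smul, norm_smul, Real.norm_eq_abs, abs_of_pos hα0, hα]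
    field_simp
  have habs : |h - ‖r η - r ξ‖| ≤ ‖r η - r ξ - fderiv ℝ r ξ v‖ := by
    rw [← hDvnorm]
    calc |‖fderiv ℝ r ξ v‖ - ‖r η - r ξ‖|
        = |‖r η - r ξ‖ - ‖fderiv ℝ r ξ v‖| := abs_sub_comm _ _
      _ ≤ ‖r η - r ξ - fderiv ℝ r ξ v‖ := abs_norm_sub_norm_le _ _
  have hsq : α ^ 2 ≤ ρ ^ 2 := pow_le_pow_left₀ hα0.le hαρ 2
  calc |h - ‖r η - r ξ‖| ≤ ‖r η - r ξ - fderiv ℝ r ξ v‖ := habs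
    _ ≤ Real.sqrt n * (M * α ^ 2) / 2 := hrem
    _ ≤ Real.sqrt n * (M * ρ ^ 2) / 2 := by
        have hs0 : (0:ℝ) ≤ Real.sqrt n := Real.sqrt_nonneg _
        nlinarith [mul_le_mul_of_nonneg_left hsq hM0]
    _ = Real.sqrt n / 2 * h ^ 2 * M / σ ^ 2 := by
        rw [hρ]
        field_simp
end

section
/- Let m, n ≥ 1, let Ξ ⊆ ℝ^m be an open convex set, and let r : ℝ^m → ℝ^n be twice continuously differentiable on Ξ. Let h : ℝ^n → ℝ be a nodal spacing function and suppose there are constants h_M > 0, σ_m > 0 and S ≥ 0 such that: (i) 0 < h(r(ξ)) ≤ h_M for all ξ ∈ Ξ; (ii) ‖Dr(ξ)u‖ ≥ σ_m‖u‖ for all ξ ∈ Ξ and all u ∈ ℝ^m; (iii) ‖D²r_i(ξ)‖ ≤ S for every component i = 1,…,n and all ξ ∈ Ξ, where ‖D²r_i(ξ)‖ is the operator norm of the second derivative of the i-th coordinate function of r. Then for every ξ ∈ Ξ and every unit vector s ∈ ℝ^m such that η = ξ + (h(r(ξ)) / ‖Dr(ξ)s‖) s lies in Ξ, the spacing error Δh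 = h(r(ξ)) − ‖r(η) − r(ξ)‖ satisfies the uniform bound |Δh| ≤ (√n / 2) · h_M² · S / σ_m². -/
open Set

lemma second_order_taylor {E : Type*} [NormedAddCommGroup E] [NormedSpace ℝ E]
    {Ξ : Set E} (hΞopen : IsOpen Ξ) (hΞconv : Convex ℝ Ξ)
    {f : E → ℝ} (hf : ContDiffOn ℝ 2 f Ξ) {S : ℝ}
    (hhess : ∀ x ∈ Ξ, ‖iteratedFDeriv ℝ 2 f x‖ ≤ S)
    {ξ η : E} (hξ : ξ ∈ Ξ) (hη : η ∈ Ξ) :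
    |f η - f ξ - fderiv ℝ f ξ (η - ξ)| ≤ S / 2 * ‖η - ξ‖ ^ 2 := by
  set F := fderiv ℝ f with hF
  set v := η - ξ with hv
  -- every point x ∈ Ξ : f differentiable at x
  have hdiff : ∀ x ∈ Ξ, DifferentiableAt ℝ f x := fun x hx =>
    (hf.contDiffAt (hΞopen.mem_nhds hx)).differentiableAt two_ne_zero
  -- F is C¹ on Ξ
  have hFc : ContDiffOn ℝ 1 F Ξ := hf.fderiv_of_isOpen hΞopen le_rfl
  -- ‖fderivWithin F Ξ x‖ = ‖iteratedFDeriv 2 f x‖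
  have hFnorm : ∀ x ∈ Ξ, ‖fderivWithin ℝ F Ξ x‖ ≤ S := by
    intro x hx
    rw [fderivWithin_of_isOpen hΞopen hx]
    have e1 : ‖fderiv ℝ F x‖ = ‖iteratedFDeriv ℝ 2 f x‖ := by
      calc ‖fderiv ℝ F x‖ = ‖iteratedFDeriv ℝ 0 (fderiv ℝ F) x‖ :=
            by rw [norm_iteratedFDeriv_zero]
        _ = ‖iteratedFDeriv ℝ 1 F x‖ := norm_iteratedFDeriv_fderiv
        _ = ‖iteratedFDeriv ℝ 2 f x‖ := norm_iteratedFDeriv_fderiv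
    rw [e1]; exact hhess x hx
  have hFlip : ∀ x ∈ Ξ, ‖F x - F ξ‖ ≤ S * ‖x - ξ‖ := fun x hx =>
    hΞconv.norm_image_sub_le_of_norm_fderivWithin_le
      (hFc.differentiableOn one_ne_zero) hFnorm hξ hx
  -- points on the segment
  have hline : ∀ t ∈ Icc (0:ℝ) 1, ξ + t • v ∈ Ξ := by
    intro t ht
    have := hΞconv hξ hη (by linarith [ht.2] : (0:ℝ) ≤ 1 - t) ht.1 (by ring)
    convert this using 1
    simp only [hv, smul_sub]
    module
  set c := F ξ v with hc
  set g : ℝ → ℝ := fun t => f (ξ + t • v) - f ξ - t * c with hg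
  set g' : ℝ → ℝ := fun t => F (ξ + t • v) v - c with hg'
  have hgderiv : ∀ t ∈ Icc (0:ℝ) 1, HasDerivAt g (g' t) t := by
    intro t ht
    have hx := hline t ht
    have h1 : HasDerivAt (fun t : ℝ => ξ + t • v) v t := by
      simpa using ((hasDerivAt_id t).smul_const v).const_add ξ
    have h2 : HasDerivAt (fun t : ℝ => f (ξ + t • v)) (F (ξ + t • v) v) t :=
      ((hdiff _ hx).hasFDerivAt).comp_hasDerivAt t h1
    have := (h2.sub_const (f ξ)).sub ((hasDerivAt_id t).mul_const c)
    simp only [id, one_mul] at this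
    exact this
  have hBderiv : ∀ t : ℝ, HasDerivAt (fun t => S / 2 * ‖v‖ ^ 2 * t ^ 2)
      (S * ‖v‖ ^ 2 * t) t := by
    intro t
    have := (hasDerivAt_pow 2 t).const_mul (S / 2 * ‖v‖ ^ 2)
    refine this.congr_deriv ?_
    norm_num
    ring
  have key : ∀ x ∈ Icc (0:ℝ) 1, ‖g x‖ ≤ S / 2 * ‖v‖ ^ 2 * x ^ 2 := by
    intro x hx
    refine image_norm_le_of_norm_deriv_right_le_deriv_boundary
      (f := g) (f' := g') (a := 0) (b := 1)
      (fun t ht => (hgderiv t ht).continuousAt.continuousWithinAt)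
      (fun t ht => (hgderiv t (Ico_subset_Icc_self ht)).hasDerivWithinAt)
      (by simp [hg]) hBderiv ?_ hx
    intro t ht
    have ht' := Ico_subset_Icc_self ht
    have hx' := hline t ht'
    have : ‖g' t‖ ≤ ‖F (ξ + t • v) - F ξ‖ * ‖v‖ := by
      have : g' t = (F (ξ + t • v) - F ξ) v := by
        simp [hg', hc]
      rw [this]
      exact (F (ξ + t • v) - F ξ).le_opNorm v
    refine this.trans ?_
    have h2 : ‖F (ξ + t • v) - F ξ‖ ≤ S * (t * ‖v‖) := by
      have := hFlip _ hx'
      simpa [norm_smul, abs_of_nonneg ht.1] using this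
    calc ‖F (ξ + t • v) - F ξ‖ * ‖v‖ ≤ S * (t * ‖v‖) * ‖v‖ :=
          mul_le_mul_of_nonneg_right h2 (norm_nonneg v)
      _ = S * ‖v‖ ^ 2 * t := by ring
  have := key 1 (by norm_num)
  simp only [hg, one_smul, one_mul, one_pow, mul_one] at this
  rw [show ξ + v = η by simp [hv]] at this
  simpa [Real.norm_eq_abs, hc] using this

/-- Third (global) estimate of Proposition 2.1: with a uniform bound `h(r(ξ)) ≤ h_M` on the
spacing function, a uniform lower bound `σ_m` on the smallest singular value of the Jacobian,
and a uniform upper bound `S` on the operator norms of the Hessians of the components of `r`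
over the convex parametric domain `Ξ`, the spacing error satisfies
`|Δh| ≤ (√n / 2) · h_M² · S / σ_m²`. -/
theorem spacing_error_bound_global
    (m n : ℕ) (hm : 1 ≤ m) (hn : 1 ≤ n)
    (Ξ : Set (EuclideanSpace ℝ (Fin m))) (hΞopen : IsOpen Ξ) (hΞconv : Convex ℝ Ξ)
    (r : EuclideanSpace ℝ (Fin m) → EuclideanSpace ℝ (Fin n))
    (hr : ContDiffOn ℝ 2 r Ξ)
    (h : EuclideanSpace ℝ (Fin n) → ℝ)
    (hM σm S : ℝ) (hhM : 0 < hM) (hσm : 0 < σm) (hS : 0 ≤ S)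
    (hpos : ∀ ξ ∈ Ξ, 0 < h (r ξ))
    (hbound : ∀ ξ ∈ Ξ, h (r ξ) ≤ hM)
    (hsing : ∀ ξ ∈ Ξ, ∀ u : EuclideanSpace ℝ (Fin m), σm * ‖u‖ ≤ ‖fderiv ℝ r ξ u‖)
    (hhess : ∀ i : Fin n, ∀ ξ ∈ Ξ, ‖iteratedFDeriv ℝ 2 (fun x => r x i) ξ‖ ≤ S) :
    ∀ ξ ∈ Ξ, ∀ s : EuclideanSpace ℝ (Fin m), ‖s‖ = 1 →
      ∀ η : EuclideanSpace ℝ (Fin m),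
        η = ξ + (h (r ξ) / ‖fderiv ℝ r ξ s‖) • s → η ∈ Ξ →
          |h (r ξ) - ‖r η - r ξ‖| ≤ Real.sqrt n / 2 * hM ^ 2 * S / σm ^ 2 := by
  intro ξ hξ s hs η hη hηΞ
  have hrdiff : DifferentiableAt ℝ r ξ :=
    (hr.contDiffAt (hΞopen.mem_nhds hξ)).differentiableAt two_ne_zero
  have hDs : σm ≤ ‖fderiv ℝ r ξ s‖ := by simpa [hs] using hsing ξ hξ s
  have hDspos : 0 < ‖fderiv ℝ r ξ s‖ := lt_of_lt_of_le hσm hDs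
  set α := h (r ξ) / ‖fderiv ℝ r ξ s‖ with hα
  have hαpos : 0 < α := div_pos (hpos ξ hξ) hDspos
  have hvs : η - ξ = α • s := by rw [hη]; abel
  -- norm of v
  have hnv : ‖η - ξ‖ = α := by
    rw [hvs, norm_smul, hs, mul_one, Real.norm_eq_abs, abs_of_pos hαpos]
  have hαle : α ≤ hM / σm :=
    div_le_div₀ (le_of_lt hhM) (hbound ξ hξ) hσm hDs
  -- h (r ξ) = ‖D (η - ξ)‖
  have hval : ‖fderiv ℝ r ξ (η - ξ)‖ = h (r ξ) := by
    rw [hvs, map_smul, norm_smul, Real.norm_eq_abs, abs_of_pos hαpos, hα,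
      div_mul_cancel₀ _ (ne_of_gt hDspos)]
  -- first estimate: |Δh| ≤ ‖w‖
  set w := r η - r ξ - fderiv ℝ r ξ (η - ξ) with hw
  have step1 : |h (r ξ) - ‖r η - r ξ‖| ≤ ‖w‖ := by
    rw [← hval]
    calc |‖fderiv ℝ r ξ (η - ξ)‖ - ‖r η - r ξ‖|
        ≤ ‖fderiv ℝ r ξ (η - ξ) - (r η - r ξ)‖ := abs_norm_sub_norm_le _ _
      _ = ‖w‖ := by rw [hw, norm_sub_rev]
  -- componentwise Taylor bound
  have comp : ∀ i : Fin n, |w i| ≤ S / 2 * ‖η - ξ‖ ^ 2 := by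
    intro i
    have hfc : ContDiffOn ℝ 2 (fun x => r x i) Ξ := by
      exact (ContinuousLinearMap.contDiff
        (EuclideanSpace.proj (𝕜 := ℝ) i)).comp_contDiffOn hr
    have hfd : fderiv ℝ (fun x => r x i) ξ =
        (EuclideanSpace.proj (𝕜 := ℝ) i).comp (fderiv ℝ r ξ) :=
      ((EuclideanSpace.proj (𝕜 := ℝ) i).hasFDerivAt.comp ξ hrdiff.hasFDerivAt).fderiv
    have := second_order_taylor hΞopen hΞconv hfc (hhess i) hξ hηΞ
    rw [hfd] at this
    simpa [hw, ContinuousLinearMap.comp_apply] using this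
  -- norm bound on w
  set C := S / 2 * ‖η - ξ‖ ^ 2 with hC
  have hC0 : 0 ≤ C := by positivity
  have step2 : ‖w‖ ≤ Real.sqrt n * C := by
    rw [EuclideanSpace.norm_eq]
    have : ∑ i, ‖w i‖ ^ 2 ≤ (n : ℝ) * C ^ 2 := by
      calc ∑ i, ‖w i‖ ^ 2 ≤ ∑ _i : Fin n, C ^ 2 := by
            refine Finset.sum_le_sum fun i _ => ?_
            have := comp i
            rw [Real.norm_eq_abs]
            exact pow_le_pow_left₀ (abs_nonneg _) this 2
        _ = (n : ℝ) * C ^ 2 := by simp [Finset.sum_const, mul_comm]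
    calc Real.sqrt (∑ i, ‖w i‖ ^ 2) ≤ Real.sqrt ((n : ℝ) * C ^ 2) :=
          Real.sqrt_le_sqrt this
      _ = Real.sqrt n * C := by
          rw [Real.sqrt_mul (Nat.cast_nonneg n), Real.sqrt_sq hC0]
  -- final arithmetic
  have step3 : Real.sqrt n * C ≤ Real.sqrt n / 2 * hM ^ 2 * S / σm ^ 2 := by
    have hnle : ‖η - ξ‖ ^ 2 ≤ (hM / σm) ^ 2 := by
      rw [hnv]
      exact pow_le_pow_left₀ (le_of_lt hαpos) hαle 2
    have hsq : 0 ≤ Real.sqrt n := Real.sqrt_nonneg _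
    calc Real.sqrt n * C = Real.sqrt n * (S / 2) * ‖η - ξ‖ ^ 2 := by rw [hC]; ring
      _ ≤ Real.sqrt n * (S / 2) * (hM / σm) ^ 2 :=
          mul_le_mul_of_nonneg_left hnle (by positivity)
      _ = Real.sqrt n / 2 * hM ^ 2 * S / σm ^ 2 := by
          field_simp
  exact step1.trans (step2.trans step3)
end

section
/- Let m, n ≥ 1, let Ξ ⊆ ℝ^m be an open convex set, and let r : ℝ^m → ℝ^n be twice continuously differentiable on Ξ. Suppose there are constants σ_m > 0 and S ≥ 0 such that ‖Dr(ξ)u‖ ≥ σ_m‖u‖ for all ξ ∈ Ξ and u ∈ ℝ^m, and ‖D²r_i(ξ)‖ ≤ S for every component i = 1,…,n and all ξ ∈ Ξ. Then for every constant spacing h > 0, every ξ ∈ Ξ and every unit vector s ∈ ℝ^m such that η = ξ + (h / ‖Dr(ξ)s‖) s lies in Ξ, the relative spacing error satisfies |h − ‖r(η) − r(ξ)‖| / h ≤ (√n / 2) · (S / σ_m²) · h; in particular, the relative spacing error tends to 0 linearly as h → 0. -/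
set_option maxHeartbeats 1000000

open Set

/-- Second-order Taylor bound on `[0,1]`: if `φ` has derivative `φ'` and `φ'` has
derivative `φ''` on `[0,1]` with `‖φ''‖ ≤ C` there, then `‖φ 1 - φ 0 - φ' 0‖ ≤ C / 2`. -/
lemma quad_taylor_bound {E : Type*} [NormedAddCommGroup E] [NormedSpace ℝ E]
    (φ φ' φ'' : ℝ → E) (C : ℝ)
    (hd : ∀ t ∈ Icc (0:ℝ) 1, HasDerivAt φ (φ' t) t)
    (hd2 : ∀ t ∈ Icc (0:ℝ) 1, HasDerivAt φ' (φ'' t) t)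
    (hb : ∀ t ∈ Icc (0:ℝ) 1, ‖φ'' t‖ ≤ C) :
    ‖φ 1 - φ 0 - φ' 0‖ ≤ C / 2 := by
  have hCt : ∀ t ∈ Icc (0:ℝ) 1, ‖φ' t - φ' 0‖ ≤ C * (t - 0) :=
    norm_image_sub_le_of_norm_deriv_le_segment'
      (fun t ht => (hd2 t ht).hasDerivWithinAt)
      (fun t ht => hb t (Ico_subset_Icc_self ht))
  set ψ : ℝ → E := fun t => φ t - φ 0 - t • φ' 0 with hψdef
  have hψd : ∀ t ∈ Icc (0:ℝ) 1, HasDerivAt ψ (φ' t - φ' 0) t := by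
    intro t ht
    have h1 : HasDerivAt (fun y : ℝ => y • φ' 0) ((1:ℝ) • φ' 0) t :=
      (hasDerivAt_id t).smul_const (φ' 0)
    have h2 := ((hd t ht).sub_const (φ 0)).sub h1
    simp only [one_smul] at h2
    exact h2
  have key : ∀ ⦃x⦄, x ∈ Icc (0:ℝ) 1 → ‖ψ x‖ ≤ C * x ^ 2 / 2 := by
    refine image_norm_le_of_norm_deriv_right_le_deriv_boundary
      (f := ψ) (f' := fun t => φ' t - φ' 0) (a := 0) (b := 1)
      (B := fun t => C * t ^ 2 / 2) (B' := fun t => C * t)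
      (fun t ht => ((hψd t ht).continuousAt).continuousWithinAt)
      (fun t ht => ((hψd t (Ico_subset_Icc_self ht)).hasDerivWithinAt))
      (by simp [hψdef]) (fun x => ?_) (fun t ht => by
        simpa using hCt t (Ico_subset_Icc_self ht))
    have := ((hasDerivAt_pow 2 x).const_mul C).div_const 2
    exact this.congr_deriv (by push_cast; ring)
  have h1 := key (right_mem_Icc.2 zero_le_one)
  simpa [hψdef] using h1

lemma fderiv_euclid_apply {m n : ℕ} (g : EuclideanSpace ℝ (Fin m) → EuclideanSpace ℝ (Fin n))
    (x u : EuclideanSpace ℝ (Fin m)) (hg : DifferentiableAt ℝ g x) (i : Fin n) :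
    fderiv ℝ (fun y => g y i) x u = fderiv ℝ g x u i := by
  have h := (EuclideanSpace.proj (𝕜 := ℝ) i).hasFDerivAt.comp x hg.hasFDerivAt
  have h2 : HasFDerivAt (fun y => g y i)
      ((EuclideanSpace.proj (𝕜 := ℝ) i).comp (fderiv ℝ g x)) x := h
  rw [h2.fderiv]
  rfl

/-- The 'in particular' consequence of Proposition 2.1: for constant spacing `h > 0`, the
relative spacing error is bounded by `(√n / 2) · (S / σ_m²) · h`, i.e., it decreases linearly
with `h`. -/
theorem relative_spacing_error_linear
    (m n : ℕ) (hm : 1 ≤ m) (hn : 1 ≤ n)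
    (Ξ : Set (EuclideanSpace ℝ (Fin m))) (hΞopen : IsOpen Ξ) (hΞconv : Convex ℝ Ξ)
    (r : EuclideanSpace ℝ (Fin m) → EuclideanSpace ℝ (Fin n))
    (hr : ContDiffOn ℝ 2 r Ξ)
    (σm S : ℝ) (hσm : 0 < σm) (hS : 0 ≤ S)
    (hsing : ∀ ξ ∈ Ξ, ∀ u : EuclideanSpace ℝ (Fin m), σm * ‖u‖ ≤ ‖fderiv ℝ r ξ u‖)
    (hhess : ∀ i : Fin n, ∀ ξ ∈ Ξ, ‖iteratedFDeriv ℝ 2 (fun x => r x i) ξ‖ ≤ S) :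
    ∀ h : ℝ, 0 < h → ∀ ξ ∈ Ξ, ∀ s : EuclideanSpace ℝ (Fin m), ‖s‖ = 1 →
      ∀ η : EuclideanSpace ℝ (Fin m),
        η = ξ + (h / ‖fderiv ℝ r ξ s‖) • s → η ∈ Ξ →
          |h - ‖r η - r ξ‖| / h ≤ Real.sqrt n / 2 * (S / σm ^ 2) * h := by
  intro h hh ξ hξ s hs η hη hηΞ
  have hDs : σm ≤ ‖fderiv ℝ r ξ s‖ := by simpa [hs] using hsing ξ hξ s
  have hDspos : 0 < ‖fderiv ℝ r ξ s‖ := lt_of_lt_of_le hσm hDs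
  set α : ℝ := h / ‖fderiv ℝ r ξ s‖ with hα
  have hαpos : 0 < α := div_pos hh hDspos
  set v : EuclideanSpace ℝ (Fin m) := α • s with hv
  have hηv : η = ξ + v := hη
  set γ : ℝ → EuclideanSpace ℝ (Fin m) := fun t => ξ + t • v with hγ
  have hγmem : ∀ t ∈ Icc (0:ℝ) 1, γ t ∈ Ξ := by
    intro t ht
    have hconv := hΞconv hξ hηΞ (sub_nonneg.2 ht.2) ht.1 (by ring)
    have : (1 - t) • ξ + t • η = γ t := by
      rw [hηv, hγ]; module
    rwa [this] at hconv
  have hγd : ∀ t : ℝ, HasDerivAt γ v t := by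
    intro t
    have h1 : HasDerivAt (fun y : ℝ => y • v) ((1:ℝ) • v) t :=
      (hasDerivAt_id t).smul_const v
    simpa [hγ] using h1.const_add ξ
  -- smoothness facts at points of Ξ
  have hrx : ∀ x ∈ Ξ, ContDiffAt ℝ 2 r x := fun x hx => hr.contDiffAt (hΞopen.mem_nhds hx)
  have hrd : ∀ x ∈ Ξ, DifferentiableAt ℝ r x := fun x hx =>
    (hrx x hx).differentiableAt two_ne_zero
  set w : EuclideanSpace ℝ (Fin m) → EuclideanSpace ℝ (Fin n) :=
    fun x => fderiv ℝ r x v with hw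
  have hfd1 : ∀ x ∈ Ξ, ContDiffAt ℝ 1 (fderiv ℝ r) x := fun x hx =>
    (hrx x hx).fderiv_right (by norm_num)
  have hwd : ∀ x ∈ Ξ, DifferentiableAt ℝ w x := by
    intro x hx
    exact (((hfd1 x hx).differentiableAt one_ne_zero).clm_apply (differentiableAt_const v))
  -- the curve and its derivatives
  set φ : ℝ → EuclideanSpace ℝ (Fin n) := fun t => r (γ t) with hφ
  set φ' : ℝ → EuclideanSpace ℝ (Fin n) := fun t => fderiv ℝ r (γ t) v with hφ'
  set φ'' : ℝ → EuclideanSpace ℝ (Fin n) := fun t => fderiv ℝ w (γ t) v with hφ''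
  have hd : ∀ t ∈ Icc (0:ℝ) 1, HasDerivAt φ (φ' t) t := by
    intro t ht
    exact ((hrd _ (hγmem t ht)).hasFDerivAt).comp_hasDerivAt t (hγd t)
  have hd2 : ∀ t ∈ Icc (0:ℝ) 1, HasDerivAt φ' (φ'' t) t := by
    intro t ht
    exact ((hwd _ (hγmem t ht)).hasFDerivAt).comp_hasDerivAt t (hγd t)
  -- componentwise bound on φ''
  have hcomp : ∀ x ∈ Ξ, ∀ i : Fin n, |fderiv ℝ w x v i| ≤ S * ‖v‖ ^ 2 := by
    intro x hx i
    set fi : EuclideanSpace ℝ (Fin m) → ℝ := fun y => r y i with hfi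
    have hfix : ∀ y ∈ Ξ, ContDiffAt ℝ 2 fi y := by
      intro y hy
      exact (EuclideanSpace.proj i).contDiff.comp_contDiffAt y (hrx y hy)
    -- w y i = fderiv fi y v on Ξ
    have hAy : ∀ y ∈ Ξ, w y i = fderiv ℝ fi y v := fun y hy =>
      (fderiv_euclid_apply r y v (hrd y hy) i).symm
    -- fderiv of the i-th component of w
    have hBi : fderiv ℝ w x v i = fderiv ℝ (fun y => w y i) x v :=
      (fderiv_euclid_apply w x v (hwd x hx) i).symm
    have hCi : fderiv ℝ (fun y => w y i) x = fderiv ℝ (fun y => fderiv ℝ fi y v) x := by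
      apply Filter.EventuallyEq.fderiv_eq
      filter_upwards [hΞopen.mem_nhds hx] with y hy
      exact hAy y hy
    have hfid : DifferentiableAt ℝ (fderiv ℝ fi) x :=
      ((hfix x hx).fderiv_right (by norm_num)).differentiableAt one_ne_zero
    have hDi : fderiv ℝ (fun y => fderiv ℝ fi y v) x
        = (fderiv ℝ (fderiv ℝ fi) x).flip v := by
      have := fderiv_clm_apply (c := fderiv ℝ fi) (u := fun _ => v) hfid
        (differentiableAt_const v)
      simpa using this
    have hEi : fderiv ℝ (fderiv ℝ fi) x v v = iteratedFDeriv ℝ 2 fi x ![v, v] := by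
      rw [iteratedFDeriv_two_apply]
      simp
    have hval : fderiv ℝ w x v i = iteratedFDeriv ℝ 2 fi x ![v, v] := by
      rw [hBi, hCi, hDi, ← hEi]
      rfl
    rw [hval]
    have hle := (iteratedFDeriv ℝ 2 fi x).le_opNorm ![v, v]
    have hprod : (∏ j : Fin 2, ‖(![v, v] : Fin 2 → _) j‖) = ‖v‖ ^ 2 := by
      simp [Fin.prod_univ_two, sq]
    rw [hprod] at hle
    calc |iteratedFDeriv ℝ 2 fi x ![v, v]| = ‖iteratedFDeriv ℝ 2 fi x ![v, v]‖ := rfl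
      _ ≤ ‖iteratedFDeriv ℝ 2 fi x‖ * ‖v‖ ^ 2 := hle
      _ ≤ S * ‖v‖ ^ 2 := by
          have := hhess i x hx
          have h2 : (0:ℝ) ≤ ‖v‖ ^ 2 := sq_nonneg _
          nlinarith [norm_nonneg (iteratedFDeriv ℝ 2 fi x)]
  -- norm bound on φ''
  have hb : ∀ t ∈ Icc (0:ℝ) 1, ‖φ'' t‖ ≤ Real.sqrt n * (S * ‖v‖ ^ 2) := by
    intro t ht
    have hx := hγmem t ht
    have hnorm : ‖φ'' t‖ = Real.sqrt (∑ i, ‖φ'' t i‖ ^ 2) := EuclideanSpace.norm_eq _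
    rw [hnorm]
    have hSn : (0:ℝ) ≤ S * ‖v‖ ^ 2 := mul_nonneg hS (sq_nonneg _)
    have hsum : (∑ i, ‖φ'' t i‖ ^ 2) ≤ n * (S * ‖v‖ ^ 2) ^ 2 := by
      calc (∑ i, ‖φ'' t i‖ ^ 2) ≤ ∑ _i : Fin n, (S * ‖v‖ ^ 2) ^ 2 := by
            apply Finset.sum_le_sum
            intro i _
            have := hcomp _ hx i
            have h1 : ‖φ'' t i‖ = |fderiv ℝ w (γ t) v i| := rfl
            rw [h1]
            exact pow_le_pow_left₀ (abs_nonneg _) this 2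
        _ = n * (S * ‖v‖ ^ 2) ^ 2 := by simp [Finset.sum_const, mul_comm]
    calc Real.sqrt (∑ i, ‖φ'' t i‖ ^ 2) ≤ Real.sqrt (n * (S * ‖v‖ ^ 2) ^ 2) :=
          Real.sqrt_le_sqrt hsum
      _ = Real.sqrt n * (S * ‖v‖ ^ 2) := by
          rw [Real.sqrt_mul (Nat.cast_nonneg n), Real.sqrt_sq hSn]
  -- apply the Taylor bound
  have hkey := quad_taylor_bound φ φ' φ'' (Real.sqrt n * (S * ‖v‖ ^ 2)) hd hd2 hb
  have hγ0 : γ 0 = ξ := by simp [hγ]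
  have hγ1 : γ 1 = η := by simp [hγ, hηv]
  have hkey2 : ‖r η - r ξ - fderiv ℝ r ξ v‖ ≤ Real.sqrt n * (S * ‖v‖ ^ 2) / 2 := by
    have h0 : φ 0 = r ξ := by rw [hφ]; simp [hγ0]
    have h1 : φ 1 = r η := by rw [hφ]; simp [hγ1]
    have h2 : φ' 0 = fderiv ℝ r ξ v := by rw [hφ']; simp [hγ0]
    rwa [h1, h0, h2] at hkey
  -- ‖Dr ξ v‖ = h
  have hnv : ‖fderiv ℝ r ξ v‖ = h := by
    rw [hv, map_smul, norm_smul, Real.norm_eq_abs, abs_of_pos hαpos, hα,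
      div_mul_cancel₀ _ (ne_of_gt hDspos)]
  have hvnorm : ‖v‖ = α := by
    rw [hv, norm_smul, hs, Real.norm_eq_abs, abs_of_pos hαpos, mul_one]
  have hαle : α ≤ h / σm := by
    rw [hα]
    exact div_le_div_of_nonneg_left hh.le hσm hDs
  -- final estimate
  have habs : |h - ‖r η - r ξ‖| ≤ Real.sqrt n * (S * α ^ 2) / 2 := by
    have h1 : |‖fderiv ℝ r ξ v‖ - ‖r η - r ξ‖| ≤ ‖fderiv ℝ r ξ v - (r η - r ξ)‖ :=
      abs_norm_sub_norm_le _ _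
    rw [hnv] at h1
    have h2 : ‖fderiv ℝ r ξ v - (r η - r ξ)‖ = ‖r η - r ξ - fderiv ℝ r ξ v‖ :=
      norm_sub_rev _ _
    rw [h2] at h1
    rw [← hvnorm]
    exact h1.trans hkey2
  have hbound : Real.sqrt n * (S * α ^ 2) / 2 ≤
      Real.sqrt n / 2 * (S / σm ^ 2) * h * h := by
    have hsq : α ^ 2 ≤ (h / σm) ^ 2 := by
      apply pow_le_pow_left₀ hαpos.le hαle
    have hsqrtn : (0:ℝ) ≤ Real.sqrt n := Real.sqrt_nonneg n
    have hexp : Real.sqrt n / 2 * (S / σm ^ 2) * h * h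
        = Real.sqrt n * (S * (h / σm) ^ 2) / 2 := by
      field_simp
    rw [hexp]
    have : S * α ^ 2 ≤ S * (h / σm) ^ 2 := by nlinarith
    nlinarith
  rw [div_le_iff₀ hh]
  calc |h - ‖r η - r ξ‖| ≤ Real.sqrt n * (S * α ^ 2) / 2 := habs
    _ ≤ Real.sqrt n / 2 * (S / σm ^ 2) * h * h := hbound
end
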